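/- Let b be a cluster decomposition of {1,…,N} and let α = {i,j} (i ≠ j) be a pair contained in a single cluster of b. Then for every r ∈ X, (m_i m_j/(m_i + m_j)) |r_i − r_j|_e² ≤ |x^b(r)|². -/

import Mathlib

open scoped BigOperators

noncomputable section

/-- The one-particle space `ℝ^ν`. -/
abbrev Vec (ν : ℕ) := EuclideanSpace ℝ (Fin ν)

/-- Configurations of `N` particles in `ℝ^ν`. -/
abbrev Conf (N ν : ℕ) := Fin N → Vec ν

/-- The mass inner product `⟨r,s⟩ = Σ m_i (r_i · s_i)`. -/
def minner {N ν : ℕ} (m : Fin N → ℝ) (r s : Conf N ν) : ℝ :=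
  ∑ i, m i * (inner ℝ (r i) (s i) : ℝ)

/-- The subspace `X_b = { r ∈ X : r is constant on each cluster of b }`. -/
def XbSet {N ν : ℕ} (m : Fin N → ℝ) (b : Setoid (Fin N)) : Set (Conf N ν) :=
  {r | (∑ i, m i • r i = 0) ∧ ∀ i j, b.r i j → r i = r j}

/-- `p` is the orthogonal projection of `r` onto `S` w.r.t. the mass inner product. -/
def IsOrthProjOn {N ν : ℕ} (m : Fin N → ℝ) (S : Set (Conf N ν)) (r p : Conf N ν) : Prop :=
  p ∈ S ∧ ∀ w ∈ S, minner m (r - p) w = 0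

/-- if the pair `α = {i,j}` (with `i ≠ j`) lies in a single cluster of `b`,
then `(m_i m_j/(m_i+m_j)) |r_i − r_j|² ≤ |x^b(r)|²` for every `r ∈ X`, where
`x^b(r) = r − x_b(r)` and `x_b(r)` is the orthogonal projection of `r` onto `X_b`. -/
theorem stmt3 {N ν : ℕ} (hN : 2 ≤ N) (hν : 1 ≤ ν) (m : Fin N → ℝ) (hm : ∀ i, 0 < m i)
    (b : Setoid (Fin N)) (i j : Fin N) (hij : i ≠ j) (hb : b.r i j)
    (r : Conf N ν) (hr : ∑ k, m k • r k = 0)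
    (pb : Conf N ν) (hpb : IsOrthProjOn m (XbSet m b) r pb) :
    (m i * m j / (m i + m j)) * ‖r i - r j‖ ^ 2 ≤ minner m (r - pb) (r - pb) := by
  have hpbij : pb i = pb j := hpb.1.2 i j hb
  set q : Conf N ν := r - pb with hq
  have hqij : q i - q j = r i - r j := by
    simp only [hq, Pi.sub_apply, hpbij]; abel
  have hsum : minner m q q = ∑ k, m k * ‖q k‖ ^ 2 := by
    unfold minner
    refine Finset.sum_congr rfl fun k _ => ?_
    rw [real_inner_self_eq_norm_sq]
  have hmain : m i * ‖q i‖ ^ 2 + m j * ‖q j‖ ^ 2 ≤ ∑ k, m k * ‖q k‖ ^ 2 := by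
    have h := Finset.sum_le_sum_of_subset_of_nonneg
      (f := fun k => m k * ‖q k‖ ^ 2) (s := ({i, j} : Finset (Fin N))) (Finset.subset_univ _)
      (fun k _ _ => mul_nonneg (hm k).le (sq_nonneg _))
    simpa [Finset.sum_pair hij] using h
  have hpos : 0 < m i + m j := add_pos (hm i) (hm j)
  have hcs : |(inner ℝ (q i) (q j) : ℝ)| ≤ ‖q i‖ * ‖q j‖ := abs_real_inner_le_norm _ _
  have hexp : ‖q i - q j‖ ^ 2
      = ‖q i‖ ^ 2 - 2 * (inner ℝ (q i) (q j) : ℝ) + ‖q j‖ ^ 2 := norm_sub_sq_real _ _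
  have h1 := (abs_le.mp hcs).1
  have key : m i * m j / (m i + m j) * ‖q i - q j‖ ^ 2
      ≤ m i * ‖q i‖ ^ 2 + m j * ‖q j‖ ^ 2 := by
    rw [div_mul_eq_mul_div, div_le_iff₀ hpos, hexp]
    nlinarith [sq_nonneg (m i * ‖q i‖ - m j * ‖q j‖),
      mul_nonneg (mul_pos (hm i) (hm j)).le
        (by linarith : (0:ℝ) ≤ (inner ℝ (q i) (q j) : ℝ) + ‖q i‖ * ‖q j‖)]
  rw [hsum, ← hqij]
  linarith
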